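/- Let w = p^k be a simple k-power with |p| = m, let x = p^{k+1}, and suppose x = u q^k v with |q| < m and u, v nonempty proper factors positioned so that q^k is a factor of some conjugate of w distinct from w. Then w contains a k-power as a proper factor, a contradiction; hence no conjugate of a simple k-power properly contains a k-power. -/

import Mathlib

/-- `p^k`: the word `p` concatenated `k` times. -/
def listPow {α : Type*} (p : List α) (k : ℕ) : List α := (List.replicate k p).flatten

/-- A `k`-power is a nonempty word of the form `p^k`. -/
def IsKPower {α : Type*} (k : ℕ) (w : List α) : Prop := ∃ p : List α, p ≠ [] ∧ w = listPow p k

/-- A simple `k`-power: a `k`-power none of whose proper factors is a `k`-power. -/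
def SimpleKPower {α : Type*} (k : ℕ) (w : List α) : Prop :=
  IsKPower k w ∧ ∀ y : List α, y <:+: w → y ≠ w → ¬ IsKPower k y

namespace LPAux
variable {α : Type*}

theorem listPow_zero (p : List α) : listPow p 0 = [] := rfl

theorem listPow_succ (p : List α) (n : ℕ) : listPow p (n+1) = p ++ listPow p n := by
  simp [listPow, List.replicate_succ]

theorem listPow_one (p : List α) : listPow p 1 = p := by
  simp [listPow_succ, listPow_zero]

theorem listPow_two (p : List α) : listPow p 2 = p ++ p := by
  simp [listPow_succ, listPow_zero, listPow_one]

theorem length_listPow (p : List α) (n : ℕ) : (listPow p n).length = n * p.length := by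
  induction n with
  | zero => simp [listPow_zero]
  | succ n ih => rw [listPow_succ]; simp [ih, Nat.succ_mul]; omega

theorem listPow_add (p : List α) (a b : ℕ) :
    listPow p (a + b) = listPow p a ++ listPow p b := by
  induction a with
  | zero => simp [listPow_zero]
  | succ a ih => rw [Nat.succ_add, listPow_succ, listPow_succ, ih, List.append_assoc]

theorem listPow_mul (p : List α) (a b : ℕ) :
    listPow p (a * b) = listPow (listPow p b) a := by
  induction a with
  | zero => simp [listPow_zero]
  | succ a ih => rw [show (a+1)*b = b + a*b by ring, listPow_add, listPow_succ, ih]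

theorem getElem_listPow (p : List α) (n j : ℕ) (h : j < (listPow p n).length)
    (h2 : j % p.length < p.length) :
    (listPow p n)[j] = p[j % p.length] := by
  induction n generalizing j with
  | zero => simp [listPow_zero] at h
  | succ n ih =>
    rw [listPow_succ] at h
    rw [List.getElem_of_eq (listPow_succ p n)]
    rcases Nat.lt_or_ge j p.length with hj | hj
    · rw [List.getElem_append_left hj]
      congr 1
      exact (Nat.mod_eq_of_lt hj).symm
    · rw [List.getElem_append_right hj]
      have hmod : (j - p.length) % p.length = j % p.length := by
        conv_rhs => rw [show j = (j - p.length) + p.length from by omega]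
        rw [Nat.add_mod_right]
      have hlt : j - p.length < (listPow p n).length := by
        simp only [List.length_append] at h; omega
      rw [ih (j - p.length) hlt (by rw [hmod]; exact h2)]
      congr 1

theorem getElem_of_infix {X y s t : List α} (hst : s ++ y ++ t = X) (j : ℕ)
    (hj : j < y.length) (hX : s.length + j < X.length) :
    y[j] = X[s.length + j] := by
  subst hst
  have h1 : s.length + j < (s ++ y).length := by simp; omega
  rw [List.getElem_append_left h1, List.getElem_append_right (by omega : s.length ≤ s.length + j)]
  congr 1
  omega

theorem comm_lemma : ∀ n (x z : List α), 2 * x.length + z.length ≤ n → x ≠ [] → z ≠ [] →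
    x ++ z = z ++ x →
    ∃ r : List α, r ≠ [] ∧ ∃ a b, 1 ≤ a ∧ 1 ≤ b ∧ x = listPow r a ∧ z = listPow r b := by
  intro n
  induction n with
  | zero =>
    intro x z hn hx _ _
    exact absurd (by omega : x.length = 0) (by simpa using hx)
  | succ n ih =>
    intro x z hn hx hz heq
    rcases le_or_gt x.length z.length with hle | hlt
    · -- x is a prefix of z
      have hxz : x = z.take x.length := by
        have h1 : (x ++ z).take x.length = x := List.take_left (l₁ := x) (l₂ := z)
        have h2 : (z ++ x).take x.length = z.take x.length :=
          List.take_append_of_le_length hle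
        rw [heq] at h1; exact h1.symm.trans h2
      have hzsplit : z = x ++ z.drop x.length := by
        nth_rewrite 1 [← List.take_append_drop x.length z]
        rw [← hxz]
      set z2 := z.drop x.length with hz2
      by_cases hz2e : z2 = []
      · refine ⟨x, hx, 1, 1, le_refl _, le_refl _, (listPow_one x).symm, ?_⟩
        rw [hzsplit, hz2e, List.append_nil, listPow_one]
      · have heq2 : x ++ z2 = z2 ++ x := by
          have : x ++ (x ++ z2) = (x ++ z2) ++ x := by rw [← hzsplit]; exact heq
          rw [List.append_assoc] at this
          exact List.append_cancel_left this
        have hxlen : 1 ≤ x.length := List.length_pos_iff.2 hx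
        have hzn : 2 * x.length + z2.length ≤ n := by
          have h3 : z2.length = z.length - x.length := by rw [hz2]; simp
          omega
        obtain ⟨r, hr, a, b, ha, hb, hxa, hzb⟩ := ih x z2 hzn hx hz2e heq2
        exact ⟨r, hr, a, a + b, ha, by omega, hxa,
          by rw [hzsplit, hxa, hzb, ← listPow_add]⟩
    · have hzx : z ++ x = x ++ z := heq.symm
      obtain ⟨r, hr, a, b, ha, hb, hza, hxb⟩ := by
        apply ih z x (by omega) hz hx hzx
      exact ⟨r, hr, b, a, hb, ha, hxb, hza⟩

end LPAux


/-- No conjugate of a simple `k`-power properly contains a `k`-power: if `uv` is a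
simple `k`-power then no proper factor of the conjugate `vu` is a `k`-power. -/
theorem conjugate_of_simpleKPower_no_proper_kpower {α : Type*} (k : ℕ) (hk : 2 ≤ k)
    (u v : List α) (h : SimpleKPower k (u ++ v)) :
    ∀ y : List α, y <:+: v ++ u → y ≠ v ++ u → ¬ IsKPower k y := by
  obtain ⟨⟨p, hp, hw⟩, hsimp⟩ := h
  intro y hyinf hyne hyK
  obtain ⟨q, hq, hy⟩ := hyK
  set m := p.length with hm
  set ℓ := q.length with hℓ
  have hm1 : 1 ≤ m := List.length_pos_iff.2 hp
  have hℓ1 : 1 ≤ ℓ := List.length_pos_iff.2 hq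
  have hlenw : (u ++ v).length = k * m := by rw [hw, LPAux.length_listPow]
  have hleny : y.length = k * ℓ := by rw [hy, LPAux.length_listPow]
  have hlenvu : (v ++ u).length = k * m := by
    rw [List.length_append, Nat.add_comm, ← List.length_append, hlenw]
  have hylt : y.length < k * m := by
    rcases lt_or_eq_of_le hyinf.length_le with h1 | h1
    · omega
    · exact absurd (hyinf.eq_of_length h1) hyne
  have hℓm : ℓ < m := by
    have hkl : k * ℓ < k * m := by omega
    exact Nat.lt_of_mul_lt_mul_left hkl
  -- occurrence of y in p^(2k)
  have hvuin : v ++ u <:+: listPow p (2 * k) := by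
    refine ⟨u, v, ?_⟩
    rw [show 2 * k = k + k from by ring, LPAux.listPow_add, ← hw]
    simp [List.append_assoc]
  obtain ⟨s, t, hst⟩ := hyinf.trans hvuin
  have hXlen : (listPow p (2 * k)).length = 2 * k * m := LPAux.length_listPow p (2*k)
  have hslen : s.length + k * ℓ + t.length = 2 * k * m := by
    have := congrArg List.length hst
    simp only [List.length_append, hXlen, hleny] at this
    omega
  set i := s.length % m with hi
  have him : i < m := Nat.mod_lt _ (by omega)
  have h2m : 2 * m ≤ k * m := Nat.mul_le_mul_right m hk
  have h2l : 2 * ℓ ≤ k * ℓ := Nat.mul_le_mul_right ℓ hk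
  -- key pointwise identity
  have key2 : ∀ j, j < k * ℓ → ∀ (hq1 : j % ℓ < ℓ) (hp1 : (i + j) % m < m),
      q[j % ℓ]'hq1 = p[(i + j) % m]'hp1 := by
    intro j hj hq1 hp1
    have hyj : j < y.length := by omega
    have hXb : s.length + j < (listPow p (2 * k)).length := by rw [hXlen]; omega
    have e1 : y[j]'hyj = (listPow p (2*k))[s.length + j]'hXb :=
      LPAux.getElem_of_infix hst j hyj hXb
    have e2 : y[j]'hyj = q[j % ℓ]'hq1 := by
      rw [List.getElem_of_eq hy hyj]
      exact LPAux.getElem_listPow q k j (by rwa [hy] at hyj) hq1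
    have e3 : (listPow p (2*k))[s.length + j]'hXb = p[(s.length + j) % m]'(Nat.mod_lt _ (by omega)) :=
      LPAux.getElem_listPow p (2*k) (s.length + j) hXb (Nat.mod_lt _ (by omega))
    have e4 : (s.length + j) % m = (i + j) % m := by rw [hi, Nat.mod_add_mod]
    rw [← e2, e1, e3]
    simp only [e4]
  by_cases hcase : i + k * ℓ ≤ k * m
  · -- y is a factor of u ++ v itself
    refine hsimp y ?_ (fun e => by
      have := congrArg List.length e; rw [hlenw] at this; omega) ⟨q, hq, hy⟩
    have hyeq : y = ((u ++ v).drop i).take (k * ℓ) := by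
      apply List.ext_getElem
      · simp only [List.length_take, List.length_drop, hlenw, hleny]; omega
      · intro n h1 h2
        rw [List.getElem_take, List.getElem_drop]
        have hb : i + n < (u ++ v).length := by rw [hlenw]; omega
        have hn : n < k * ℓ := by omega
        rw [List.getElem_of_eq hw hb]
        rw [LPAux.getElem_listPow p k (i + n) (by rwa [hw] at hb) (Nat.mod_lt _ (by omega))]
        rw [List.getElem_of_eq hy h1]
        rw [LPAux.getElem_listPow q k n (by rwa [hy] at h1) (Nat.mod_lt _ (by omega))]
        exact key2 n hn _ _
    rw [hyeq]
    exact ((List.take_prefix _ _).isInfix).trans (List.drop_suffix i _).isInfix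
  · -- straddle case
    push_neg at hcase
    set d := m - i with hd
    have hid : i + d = m := by omega
    by_cases hk2 : k = 2
    · -- k = 2 : build a square s'^2 inside p ++ p
      subst hk2
      have hc1 : 1 ≤ m - ℓ := by omega
      -- p.drop ℓ = p.take (m - ℓ)
      have hP : p.drop ℓ = p.take (m - ℓ) := by
        apply List.ext_getElem
        · simp only [List.length_drop, List.length_take]; omega
        · intro a h1 h2
          have ha : a < m - ℓ := by simp at h2; omega
          rw [List.getElem_drop, List.getElem_take]
          have hb1 : d + a < 2 * ℓ := by omega
          have hb2 : d + a + ℓ < 2 * ℓ := by omega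
          have k1 := key2 (d + a) (by omega) (Nat.mod_lt _ (by omega)) (Nat.mod_lt _ (by omega))
          have k2 := key2 (d + a + ℓ) (by omega) (Nat.mod_lt _ (by omega)) (Nat.mod_lt _ (by omega))
          have e1 : (i + (d + a)) % m = a := by
            rw [show i + (d + a) = a + m from by omega, Nat.add_mod_right,
              Nat.mod_eq_of_lt (by omega)]
          have e2 : (i + (d + a + ℓ)) % m = ℓ + a := by
            rw [show i + (d + a + ℓ) = (ℓ + a) + m from by omega, Nat.add_mod_right,
              Nat.mod_eq_of_lt (by omega)]
          have e3 : (d + a + ℓ) % ℓ = (d + a) % ℓ := Nat.add_mod_right _ _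
          simp only [e1] at k1
          simp only [e2, e3] at k2
          rw [← k2, ← k1]
      set c := m - ℓ with hc
      set s' := p.take c with hs'
      have hs'len : s'.length = c := by rw [hs', List.length_take]; omega
      have hs'ne : s' ≠ [] := by
        intro e; rw [e] at hs'len; simp at hs'len; omega
      have e1 : p = p.take ℓ ++ s' := by
        conv_lhs => rw [← List.take_append_drop ℓ p]
        rw [hP]
      have e2 : p = s' ++ p.drop c := by rw [hs']; exact (List.take_append_drop c p).symm
      refine hsimp (s' ++ s') ?_ ?_ ⟨s', hs'ne, (LPAux.listPow_two s').symm⟩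
      · refine ⟨p.take ℓ, p.drop c, ?_⟩
        have e3 : (p.take ℓ ++ s') ++ (s' ++ p.drop c) = p ++ p := by rw [← e1, ← e2]
        rw [hw, LPAux.listPow_two, ← e3]
        simp [List.append_assoc]
      · intro e
        have := congrArg List.length e
        rw [hlenw, List.length_append, hs'len] at this
        omega
    · -- k ≥ 3 : rotation invariance forces p to be a power
      have hk3 : 3 ≤ k := by omega
      have h3m : 3 * m ≤ k * m := Nat.mul_le_mul_right m hk3
      have circ : ∀ a (ha : a < m) (hb : (a + ℓ) % m < m), p[a]'ha = p[(a + ℓ) % m]'hb := by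
        intro a ha hb
        have hb1 : d + a < k * ℓ := by omega
        have hb2 : d + a + ℓ < k * ℓ := by omega
        have k1 := key2 (d + a) hb1 (Nat.mod_lt _ (by omega)) (Nat.mod_lt _ (by omega))
        have k2 := key2 (d + a + ℓ) hb2 (Nat.mod_lt _ (by omega)) (Nat.mod_lt _ (by omega))
        have e1 : (i + (d + a)) % m = a := by
          rw [show i + (d + a) = a + m from by omega, Nat.add_mod_right,
            Nat.mod_eq_of_lt (by omega)]
        have e2 : (i + (d + a + ℓ)) % m = (a + ℓ) % m := by
          rw [show i + (d + a + ℓ) = (a + ℓ) + m from by omega, Nat.add_mod_right]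
        have e3 : (d + a + ℓ) % ℓ = (d + a) % ℓ := Nat.add_mod_right _ _
        simp only [e1] at k1
        simp only [e2, e3] at k2
        rw [← k1, ← k2]
      have hrot : p.take ℓ ++ p.drop ℓ = p.drop ℓ ++ p.take ℓ := by
        apply List.ext_getElem
        · simp only [List.length_append, List.length_take, List.length_drop]; omega
        · intro n h1 h2
          have hnm : n < m := by
            simp only [List.length_append, List.length_take, List.length_drop] at h1
            omega
          have hL : (p.take ℓ ++ p.drop ℓ)[n]'h1 = p[n]'hnm := by
            simp only [List.getElem_of_eq (List.take_append_drop ℓ p) h1]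
          rw [hL]
          have hdl : (p.drop ℓ).length = m - ℓ := by rw [List.length_drop]
          rcases Nat.lt_or_ge n (m - ℓ) with hn | hn
          · rw [List.getElem_append_left (by omega : n < (p.drop ℓ).length)]
            rw [List.getElem_drop]
            have e : (n + ℓ) % m = ℓ + n := by rw [Nat.mod_eq_of_lt (by omega)]; omega
            have := circ n hnm (by rw [e]; omega)
            simpa only [e] using this
          · rw [List.getElem_append_right (by omega : (p.drop ℓ).length ≤ n)]
            rw [List.getElem_take]
            have e : (n + ℓ) % m = n - (p.drop ℓ).length := by
              rw [show n + ℓ = (n + ℓ - m) + m from by omega, Nat.add_mod_right,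
                Nat.mod_eq_of_lt (by omega)]
              omega
            have := circ n hnm (by rw [e]; omega)
            simpa only [e] using this
      have htne : p.take ℓ ≠ [] := by
        intro e
        have := congrArg List.length e
        simp only [List.length_take, List.length_nil] at this
        omega
      have hdne : p.drop ℓ ≠ [] := by
        intro e
        have := congrArg List.length e
        simp only [List.length_drop, List.length_nil] at this
        omega
      obtain ⟨r, hr, a, b, ha, hb, hta, hdb⟩ :=
        LPAux.comm_lemma (2 * (p.take ℓ).length + (p.drop ℓ).length) (p.take ℓ) (p.drop ℓ)
          le_rfl htne hdne hrot
      have hpr : p = listPow r (a + b) := by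
        rw [LPAux.listPow_add, ← hta, ← hdb, List.take_append_drop]
      have hrlen : 1 ≤ r.length := List.length_pos_iff.2 hr
      have hmab : m = (a + b) * r.length := by
        rw [hm, hpr, LPAux.length_listPow]
      refine hsimp (listPow r k) ?_ ?_ ⟨r, hr, rfl⟩
      · refine ⟨[], listPow r (k * (a + b) - k), ?_⟩
        rw [List.nil_append, ← LPAux.listPow_add, hw, hpr, ← LPAux.listPow_mul]
        congr 1
        have : k ≤ k * (a + b) := Nat.le_mul_of_pos_right k (by omega)
        omega
      · intro e
        have := congrArg List.length e
        rw [LPAux.length_listPow, hlenw] at this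
        have hrm : r.length = m := Nat.eq_of_mul_eq_mul_left (by omega) this
        have : 2 * r.length ≤ (a + b) * r.length := Nat.mul_le_mul_right _ (by omega)
        omega
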